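/- arXiv:2310.13511 — 2 statements merged into one kernel-verified Lean document; each statement's English description precedes it below -/
import Mathlib

section
/- Let β be a p×p real matrix with strictly positive column sums c_l := ∑_{r=1}^p β_{r l} > 0 and define B by B_{k l} := β_{k l} / √(c_l). Let Ω be a p×p matrix satisfying the compatibility condition: for all indices k, l, if c_k ≠ c_l then Ω_{k l} = 0. Then (B Ω Bᵀ) 𝟙 = β Ω 𝟙. -/
open Matrix

/-- Compromise condition: if `Ω_{kl} = 0` whenever the column sums `c_k ≠ c_l` of `β`
differ, and `B_{kl} = β_{kl}/√(c_l)` with `c_l > 0`, then `(B Ω Bᵀ) 𝟙 = β Ω 𝟙`. -/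
theorem stmt5 (p : ℕ) (β : Matrix (Fin p) (Fin p) ℝ)
    (hcol : ∀ l, 0 < ∑ r, β r l)
    (B : Matrix (Fin p) (Fin p) ℝ)
    (hB : ∀ k l, B k l = β k l / Real.sqrt (∑ r, β r l))
    (Ω : Matrix (Fin p) (Fin p) ℝ)
    (hΩ : ∀ k l, (∑ r, β r k) ≠ (∑ r, β r l) → Ω k l = 0) :
    (B * Ω * Bᵀ) *ᵥ (fun _ => (1 : ℝ)) = (β * Ω) *ᵥ (fun _ => (1 : ℝ)) := by
  have hsqrt : ∀ l, Real.sqrt (∑ r, β r l) ≠ 0 := fun l =>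
    ne_of_gt (Real.sqrt_pos.mpr (hcol l))
  have hsum : ∀ l, ∑ j, B j l = Real.sqrt (∑ r, β r l) := by
    intro l
    have : ∑ j, B j l = (∑ j, β j l) / Real.sqrt (∑ r, β r l) := by
      rw [Finset.sum_div]; exact Finset.sum_congr rfl fun j _ => hB j l
    rw [this, div_eq_iff (hsqrt l), Real.mul_self_sqrt (le_of_lt (hcol l))]
  funext i
  simp only [mulVec, dotProduct, Matrix.mul_apply, transpose_apply, mul_one]
  rw [Finset.sum_comm]
  refine Finset.sum_congr rfl fun l _ => ?_
  rw [← Finset.mul_sum, hsum l, Finset.sum_mul]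
  refine Finset.sum_congr rfl fun k _ => ?_
  by_cases h : (∑ r, β r k) = (∑ r, β r l)
  · rw [hB i k, h, div_mul_eq_mul_div, mul_div_assoc, mul_assoc,
      div_mul_cancel₀ _ (hsqrt l)]
  · rw [hΩ k l h, mul_zero, zero_mul, mul_zero]
end

section
/- Let Ω̂, Ω, Γ̂ be p×p real matrices. Then ‖Ω̂ − Ω‖_max ≤ ‖Ω‖_∞ · ‖Γ̂ Ω̂ − I‖_max + ‖Ω Γ̂ − I‖_max · ‖Ω̂‖₁, where ‖·‖_max is the entrywise maximum absolute value, ‖·‖_∞ the maximum absolute row sum, and ‖·‖₁ the maximum absolute column sum. -/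
/-- Entrywise max norm of a matrix. -/
noncomputable def maxNorm {p : ℕ} (M : Matrix (Fin p) (Fin p) ℝ) : ℝ :=
  ⨆ i, ⨆ j, |M i j|

/-- Maximum absolute column sum. -/
noncomputable def colNorm {p : ℕ} (M : Matrix (Fin p) (Fin p) ℝ) : ℝ :=
  ⨆ j, ∑ i, |M i j|

/-- Maximum absolute row sum. -/
noncomputable def rowNorm {p : ℕ} (M : Matrix (Fin p) (Fin p) ℝ) : ℝ :=
  ⨆ i, ∑ j, |M i j|

lemma abs_le_maxNorm {p : ℕ} (M : Matrix (Fin p) (Fin p) ℝ) (i j : Fin p) :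
    |M i j| ≤ maxNorm M := by
  have h1 : |M i j| ≤ ⨆ j, |M i j| :=
    le_ciSup (f := fun j => |M i j|) (Set.finite_range _).bddAbove j
  exact h1.trans (le_ciSup (f := fun i => ⨆ j, |M i j|) (Set.finite_range _).bddAbove i)

lemma rowsum_le_rowNorm {p : ℕ} (M : Matrix (Fin p) (Fin p) ℝ) (i : Fin p) :
    ∑ j, |M i j| ≤ rowNorm M :=
  le_ciSup (f := fun i => ∑ j, |M i j|) (Set.finite_range _).bddAbove i

lemma colsum_le_colNorm {p : ℕ} (M : Matrix (Fin p) (Fin p) ℝ) (j : Fin p) :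
    ∑ i, |M i j| ≤ colNorm M :=
  le_ciSup (f := fun j => ∑ i, |M i j|) (Set.finite_range _).bddAbove j

/-- Central CLIME decomposition inequality:
`‖Ω̂ − Ω‖_max ≤ ‖Ω‖_∞ ‖Γ̂Ω̂ − I‖_max + ‖ΩΓ̂ − I‖_max ‖Ω̂‖₁`. -/
theorem stmt8 (p : ℕ) (Ωhat Ω Γhat : Matrix (Fin p) (Fin p) ℝ) :
    maxNorm (Ωhat - Ω) ≤
      rowNorm Ω * maxNorm (Γhat * Ωhat - 1) + maxNorm (Ω * Γhat - 1) * colNorm Ωhat := by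
  rcases Nat.eq_zero_or_pos p with hp | hp
  · subst hp
    simp [maxNorm, rowNorm, colNorm]
  have : Nonempty (Fin p) := ⟨⟨0, hp⟩⟩
  set A := Γhat * Ωhat - 1 with hA
  set B := Ω * Γhat - 1 with hB
  have key : Ωhat - Ω = Ω * A - B * Ωhat := by
    simp only [hA, hB, Matrix.mul_sub, Matrix.sub_mul, Matrix.mul_one, Matrix.one_mul,
      ← Matrix.mul_assoc]
    abel
  have hmA : 0 ≤ maxNorm A := le_trans (abs_nonneg _) (abs_le_maxNorm A ⟨0, hp⟩ ⟨0, hp⟩)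
  have hmB : 0 ≤ maxNorm B := le_trans (abs_nonneg _) (abs_le_maxNorm B ⟨0, hp⟩ ⟨0, hp⟩)
  apply ciSup_le; intro i
  apply ciSup_le; intro j
  have h1 : |(Ωhat - Ω) i j| ≤ ∑ k, |Ω i k| * maxNorm A + ∑ k, maxNorm B * |Ωhat k j| := by
    rw [key]
    have : (Ω * A - B * Ωhat) i j = ∑ k, Ω i k * A k j - ∑ k, B i k * Ωhat k j := by
      simp [Matrix.sub_apply, Matrix.mul_apply]
    rw [this]
    refine (abs_sub _ _).trans (add_le_add ?_ ?_)
    · refine (Finset.abs_sum_le_sum_abs _ _).trans (Finset.sum_le_sum fun k _ => ?_)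
      rw [abs_mul]
      exact mul_le_mul_of_nonneg_left (abs_le_maxNorm A k j) (abs_nonneg _)
    · refine (Finset.abs_sum_le_sum_abs _ _).trans (Finset.sum_le_sum fun k _ => ?_)
      rw [abs_mul]
      exact mul_le_mul_of_nonneg_right (abs_le_maxNorm B i k) (abs_nonneg _)
  refine h1.trans (add_le_add ?_ ?_)
  · rw [← Finset.sum_mul]
    exact mul_le_mul_of_nonneg_right (rowsum_le_rowNorm Ω i) hmA
  · rw [← Finset.mul_sum]
    exact mul_le_mul_of_nonneg_left (colsum_le_colNorm Ωhat j) hmB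
end
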